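/- Fix K, σ, τ > 0 and y > 0, let Φ be the standard normal cumulative distribution function, and for S > 0 set d1(S) = (ln(S/K) + (σ²/2)τ)/(σ√τ), d2(S) = d1(S) − σ√τ and β(S) = y·(S − K)/(S·Φ(d1(S)) − K·Φ(d2(S))). Then β is strictly increasing on (0, ∞): for 0 < S₁ < S₂ one has β(S₁) < β(S₂). -/

import Mathlib

open Real Filter Topology MeasureTheory

/-- The cumulative distribution function of the standard normal distribution
(Gaussian measure on ℝ with mean 0 and variance 1). -/
noncomputable def Φ (x : ℝ) : ℝ :=
  (ProbabilityTheory.gaussianReal 0 1 (Set.Iic x)).toReal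

namespace BetaAux

noncomputable def npdf (x : ℝ) : ℝ := ProbabilityTheory.gaussianPDFReal 0 1 x

lemma npdf_pos (x : ℝ) : 0 < npdf x :=
  ProbabilityTheory.gaussianPDFReal_pos 0 1 x one_ne_zero

lemma npdf_eq (x : ℝ) : npdf x = (Real.sqrt (2 * Real.pi))⁻¹ * Real.exp (- x ^ 2 / 2) := by
  simp [npdf, ProbabilityTheory.gaussianPDFReal]

lemma continuous_npdf : Continuous npdf := by
  rw [show npdf = fun x => (Real.sqrt (2 * Real.pi))⁻¹ * Real.exp (- x ^ 2 / 2) from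
    funext npdf_eq]
  fun_prop

lemma integrable_npdf : MeasureTheory.Integrable npdf :=
  ProbabilityTheory.integrable_gaussianPDFReal 0 1

lemma Phi_eq (x : ℝ) : Φ x = ∫ t in Set.Iic x, npdf t := by
  rw [Φ, ProbabilityTheory.gaussianReal_apply_eq_integral 0 one_ne_zero,
    ENNReal.toReal_ofReal]
  · rfl
  · exact MeasureTheory.integral_nonneg fun t => (npdf_pos t).le

lemma Phi_sub (a b : ℝ) : Φ b - Φ a = ∫ t in a..b, npdf t := by
  rw [Phi_eq, Phi_eq]
  exact intervalIntegral.integral_Iic_sub_Iic integrable_npdf.integrableOn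
    integrable_npdf.integrableOn

lemma hasDerivAt_Phi (x : ℝ) : HasDerivAt Φ (npdf x) x := by
  have h : HasDerivAt (fun u => ∫ t in (0:ℝ)..u, npdf t) (npdf x) x :=
    intervalIntegral.integral_hasDerivAt_right
      (integrable_npdf.intervalIntegrable)
      (continuous_npdf.stronglyMeasurable.stronglyMeasurableAtFilter)
      continuous_npdf.continuousAt
  have : Φ = fun u => Φ 0 + ∫ t in (0:ℝ)..u, npdf t := by
    funext u
    rw [← Phi_sub 0 u]; ring
  rw [this]
  exact (h.const_add (Φ 0))

lemma Phi_strictMono : StrictMono Φ :=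
  strictMono_of_deriv_pos fun x => by
    rw [(hasDerivAt_Phi x).deriv]; exact npdf_pos x

lemma Phi_nonneg (x : ℝ) : 0 ≤ Φ x := ENNReal.toReal_nonneg

lemma Phi_pos (x : ℝ) : 0 < Φ x :=
  lt_of_le_of_lt (Phi_nonneg (x - 1)) (Phi_strictMono (by linarith))

lemma Phi_le_one (x : ℝ) : Φ x ≤ 1 := by
  rw [Φ]
  have := MeasureTheory.prob_le_one
    (μ := ProbabilityTheory.gaussianReal 0 1) (s := Set.Iic x)
  exact ENNReal.toReal_le_of_le_ofReal zero_le_one (by simpa using this)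

lemma Phi_tendsto_atBot : Tendsto Φ atBot (𝓝 0) := by
  have h : Tendsto (fun x => ProbabilityTheory.gaussianReal 0 1 (Set.Iic x)) atBot
      (𝓝 (ProbabilityTheory.gaussianReal 0 1 (⋂ x : ℝ, Set.Iic x))) :=
    MeasureTheory.tendsto_measure_iInter_atBot
      (fun x => (measurableSet_Iic).nullMeasurableSet)
      (fun a b hab => Set.Iic_subset_Iic.2 hab)
      ⟨0, MeasureTheory.measure_ne_top _ _⟩
  have hempty : (⋂ x : ℝ, Set.Iic x) = ∅ := by
    ext y
    simp only [Set.mem_iInter, Set.mem_Iic, Set.mem_empty_iff_false, iff_false, not_forall]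
    exact ⟨y - 1, by simp⟩
  rw [hempty] at h
  simp only [MeasureTheory.measure_empty] at h
  have := (ENNReal.tendsto_toReal (by simp : (0:ENNReal) ≠ ⊤)).comp h
  simp only [ENNReal.toReal_zero] at this; exact this

end BetaAux

open BetaAux in
/-- The call-hedging ratio β(S) = y·(S − K)/V_call(S) is strictly increasing on (0, ∞). -/
theorem beta_strictMono (K σ τ y : ℝ) (hK : 0 < K) (hσ : 0 < σ) (hτ : 0 < τ)
    (hy : 0 < y)
    (d1 d2 β : ℝ → ℝ)
    (hd1 : ∀ S, d1 S = (Real.log (S / K) + (σ ^ 2 / 2) * τ) / (σ * Real.sqrt τ))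
    (hd2 : ∀ S, d2 S = d1 S - σ * Real.sqrt τ)
    (hβ : ∀ S, β S = y * (S - K) / (S * Φ (d1 S) - K * Φ (d2 S))) :
    ∀ S₁ S₂ : ℝ, 0 < S₁ → S₁ < S₂ → β S₁ < β S₂ := by
  -- abbreviations
  set s : ℝ := σ * Real.sqrt τ with hs_def
  have hs : 0 < s := mul_pos hσ (Real.sqrt_pos.2 hτ)
  have hs2 : s ^ 2 = σ ^ 2 * τ := by
    rw [hs_def, mul_pow, Real.sq_sqrt hτ.le]
  set D1 : ℝ → ℝ := fun S => (Real.log (S / K) + (σ ^ 2 / 2) * τ) / s with hD1_def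
  set D2 : ℝ → ℝ := fun S => D1 S - s with hD2_def
  set V : ℝ → ℝ := fun S => S * Φ (D1 S) - K * Φ (D2 S) with hV_def
  have hd1' : ∀ S, d1 S = D1 S := fun S => hd1 S
  have hd2' : ∀ S, d2 S = D2 S := fun S => by rw [hd2, hd1']
  have hβ' : ∀ S, β S = y * (S - K) / V S := fun S => by rw [hβ, hd1', hd2']
  -- d2 < d1
  have hlt : ∀ S, D2 S < D1 S := fun S => by simp [hD2_def, hs]
  -- derivative of D1 at S > 0
  have hD1deriv : ∀ S : ℝ, 0 < S → HasDerivAt D1 (1 / (S * s)) S := by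
    intro S hS
    have h1 : HasDerivAt (fun u : ℝ => (Real.log u - Real.log K + (σ ^ 2 / 2) * τ) / s)
        (1 / (S * s)) S := by
      have := ((Real.hasDerivAt_log hS.ne').sub_const (Real.log K)).add_const ((σ ^ 2 / 2) * τ)
      have h := this.div_const s
      refine h.congr_deriv ?_
      ring
    apply h1.congr_of_eventuallyEq
    filter_upwards [eventually_gt_nhds hS] with u hu
    show (Real.log (u / K) + (σ ^ 2 / 2) * τ) / s = _
    rw [Real.log_div hu.ne' hK.ne']
  have hD2deriv : ∀ S : ℝ, 0 < S → HasDerivAt D2 (1 / (S * s)) S := fun S hS =>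
    (hD1deriv S hS).sub_const s
  -- the key pdf identity
  have hkey : ∀ S : ℝ, 0 < S → S * npdf (D1 S) = K * npdf (D2 S) := by
    intro S hS
    have hD1alt : D1 S = Real.log (S / K) / s + s / 2 := by
      show (Real.log (S / K) + (σ ^ 2 / 2) * τ) / s = _
      field_simp
      linear_combination (-σ^2) * (Real.sq_sqrt hτ.le)
    have hsq : D1 S ^ 2 = D2 S ^ 2 + 2 * Real.log (S / K) := by
      have h2 : D2 S = D1 S - s := rfl
      rw [h2, hD1alt]
      field_simp
      ring
    rw [npdf_eq, npdf_eq, hsq]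
    have hexp : Real.exp (-(D2 S ^ 2 + 2 * Real.log (S / K)) / 2)
        = Real.exp (- D2 S ^ 2 / 2) * (K / S) := by
      rw [show (-(D2 S ^ 2 + 2 * Real.log (S / K)) / 2)
          = - D2 S ^ 2 / 2 + (- Real.log (S / K)) from by ring,
        Real.exp_add, ← Real.log_inv, Real.exp_log (by positivity)]
      rw [inv_div]
    rw [hexp]
    field_simp
  -- derivative of V
  have hVderiv : ∀ S : ℝ, 0 < S → HasDerivAt V (Φ (D1 S)) S := by
    intro S hS
    have h1 : HasDerivAt (fun u => Φ (D1 u)) (npdf (D1 S) * (1 / (S * s))) S :=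
      (hasDerivAt_Phi (D1 S)).comp S (hD1deriv S hS)
    have h2 : HasDerivAt (fun u => Φ (D2 u)) (npdf (D2 S) * (1 / (S * s))) S :=
      (hasDerivAt_Phi (D2 S)).comp S (hD2deriv S hS)
    have h3 : HasDerivAt V
        ((1 * Φ (D1 S) + S * (npdf (D1 S) * (1 / (S * s))))
          - K * (npdf (D2 S) * (1 / (S * s)))) S :=
      ((hasDerivAt_id S).mul h1).sub (h2.const_mul K)
    convert h3 using 1
    have hk := hkey S hS
    have hne : S * s ≠ 0 := (mul_pos hS hs).ne'
    field_simp
    linear_combination -hk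
  -- V tends to 0 at 0⁺
  have hD1bot : Tendsto D1 (nhdsWithin 0 (Set.Ioi 0)) atBot := by
    have hlog : Tendsto (fun S : ℝ => Real.log (S / K)) (nhdsWithin 0 (Set.Ioi 0)) atBot := by
      apply Real.tendsto_log_nhdsGT_zero.comp
      have : Tendsto (fun S : ℝ => S / K) (nhdsWithin 0 (Set.Ioi 0)) (nhdsWithin 0 (Set.Ioi 0)) := by
        apply tendsto_nhdsWithin_of_tendsto_nhds_of_eventually_within
        · have hdiv : Tendsto (fun S : ℝ => S / K) (nhds 0) (nhds 0) := by
            simpa using (continuous_id.div_const K).tendsto (0:ℝ)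
          exact hdiv.mono_left nhdsWithin_le_nhds
        · filter_upwards [self_mem_nhdsWithin] with u hu
          exact div_pos hu hK
      exact this
    exact (tendsto_atBot_add_const_right _ _ hlog).atBot_div_const hs
  have hD2bot : Tendsto D2 (nhdsWithin 0 (Set.Ioi 0)) atBot :=
    tendsto_atBot_add_const_right _ (-s) hD1bot
  have hVlim : Tendsto V (nhdsWithin 0 (Set.Ioi 0)) (𝓝 0) := by
    have h1 : Tendsto (fun S => S * Φ (D1 S)) (nhdsWithin 0 (Set.Ioi 0)) (𝓝 0) := by
      have hΦ : Tendsto (fun S => Φ (D1 S)) (nhdsWithin 0 (Set.Ioi 0)) (𝓝 0) :=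
        Phi_tendsto_atBot.comp hD1bot
      have hid : Tendsto (fun S : ℝ => S) (nhdsWithin 0 (Set.Ioi 0)) (𝓝 0) :=
        tendsto_id.mono_left nhdsWithin_le_nhds
      simpa using hid.mul hΦ
    have h2 : Tendsto (fun S => K * Φ (D2 S)) (nhdsWithin 0 (Set.Ioi 0)) (𝓝 0) := by
      have hΦ : Tendsto (fun S => Φ (D2 S)) (nhdsWithin 0 (Set.Ioi 0)) (𝓝 0) :=
        Phi_tendsto_atBot.comp hD2bot
      simpa using hΦ.const_mul K
    simpa using h1.sub h2
  -- V strictly monotone on Ioi 0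
  have hVcont : ContinuousOn V (Set.Ioi 0) := fun x hx =>
    ((hVderiv x hx).continuousAt).continuousWithinAt
  have hVmono : StrictMonoOn V (Set.Ioi 0) := by
    apply strictMonoOn_of_deriv_pos (convex_Ioi 0) hVcont
    intro x hx
    rw [interior_Ioi] at hx
    rw [(hVderiv x hx).deriv]
    exact Phi_pos _
  -- positivity of V
  have hVpos : ∀ S : ℝ, 0 < S → 0 < V S := by
    intro S hS
    have ht : (0:ℝ) < S / 2 := by linarith
    have h1 : V (S / 2) < V S := hVmono ht hS (by linarith)
    have h2 : 0 ≤ V (S / 2) := by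
      apply le_of_tendsto hVlim
      filter_upwards [Ioo_mem_nhdsGT_of_mem (⟨le_refl 0, ht⟩ : (0:ℝ) ∈ Set.Ico 0 (S / 2))]
        with u hu
      exact (hVmono hu.1 ht hu.2).le
    exact h2.trans_lt h1
  -- derivative of β (concrete version)
  set B : ℝ → ℝ := fun S => y * (S - K) / V S with hB_def
  have hBderiv : ∀ S : ℝ, 0 < S →
      HasDerivAt B ((y * V S - y * (S - K) * Φ (D1 S)) / (V S) ^ 2) S := by
    intro S hS
    have hnum : HasDerivAt (fun u => y * (u - K)) y S := by
      simpa using ((hasDerivAt_id S).sub_const K).const_mul y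
    exact hnum.div (hVderiv S hS) (hVpos S hS).ne'
  have hBpos : ∀ S : ℝ, 0 < S → 0 < (y * V S - y * (S - K) * Φ (D1 S)) / (V S) ^ 2 := by
    intro S hS
    apply div_pos _ (pow_pos (hVpos S hS) 2)
    have hVexp : V S - (S - K) * Φ (D1 S) = K * (Φ (D1 S) - Φ (D2 S)) := by
      rw [hV_def]; ring
    have hΦlt : Φ (D2 S) < Φ (D1 S) := Phi_strictMono (hlt S)
    have : 0 < K * (Φ (D1 S) - Φ (D2 S)) := by
      apply mul_pos hK; linarith
    nlinarith
  have hBmono : StrictMonoOn B (Set.Ioi 0) := by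
    apply strictMonoOn_of_deriv_pos (convex_Ioi 0)
    · exact fun x hx => ((hBderiv x hx).continuousAt).continuousWithinAt
    · intro x hx
      rw [interior_Ioi] at hx
      rw [(hBderiv x hx).deriv]
      exact hBpos x hx
  intro S₁ S₂ hS₁ hS₁₂
  rw [hβ' S₁, hβ' S₂]
  exact hBmono hS₁ (lt_trans hS₁ hS₁₂) hS₁₂
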